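/- Let n, d be positive integers and let S ⊆ ℝⁿ be closed. A polynomial f ∈ ℝ[X₁,…,Xₙ]_{2d} lies in the interior of P_{2d}(S) (with respect to the unique vector space topology on the finite-dimensional space ℝ[X₁,…,Xₙ]_{2d}) if and only if f(x) > 0 for all x ∈ S and f_{2d}(y) > 0 for all y ∈ S_∞. -/

import Mathlib

open MvPolynomial

noncomputable section

/-- Euclidean norm on `Fin n → ℝ`. -/
def eNorm {n : ℕ} (x : Fin n → ℝ) : ℝ := Real.sqrt (∑ i, x i ^ 2)

/-- The infinite reach `S_∞` of a set `S ⊆ ℝⁿ`. -/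
def infReach {n : ℕ} (S : Set (Fin n → ℝ)) : Set (Fin n → ℝ) :=
  {y | eNorm y = 1 ∧ ∃ x : ℕ → (Fin n → ℝ), (∀ k, x k ∈ S) ∧
    Filter.Tendsto (fun k => eNorm (x k)) Filter.atTop Filter.atTop ∧
    Filter.Tendsto (fun k => (eNorm (x k))⁻¹ • x k) Filter.atTop (nhds y)}

/-- The space `ℝ[X₁,…,Xₙ]_m` of polynomials of total degree at most `m`. -/
def PolyLE (n m : ℕ) : Submodule ℝ (MvPolynomial (Fin n) ℝ) :=
  MvPolynomial.restrictTotalDegree (Fin n) ℝ m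

/-- The unique vector space topology on the finite-dimensional space `ℝ[X₁,…,Xₙ]_m`,
realized as the topology of coefficientwise convergence. -/
instance polyTop (n m : ℕ) : TopologicalSpace (PolyLE n m) :=
  TopologicalSpace.induced
    (fun p (s : Fin n →₀ ℕ) => MvPolynomial.coeff s (p : MvPolynomial (Fin n) ℝ))
    Pi.topologicalSpace

/-- The cone `P_m(S)` of polynomials of degree at most `m` nonnegative on `S`. -/
def Pcone (n m : ℕ) (S : Set (Fin n → ℝ)) : Set (PolyLE n m) :=
  {p | ∀ x ∈ S, 0 ≤ eval x (p : MvPolynomial (Fin n) ℝ)}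

namespace Stmt2Aux

open Filter Finset


lemma eNorm_nonneg {n : ℕ} (x : Fin n → ℝ) : 0 ≤ eNorm x := Real.sqrt_nonneg _

lemma sq_eNorm {n : ℕ} (x : Fin n → ℝ) : eNorm x ^ 2 = ∑ i, x i ^ 2 :=
  Real.sq_sqrt (Finset.sum_nonneg fun i _ => sq_nonneg _)

lemma abs_le_eNorm {n : ℕ} (x : Fin n → ℝ) (i : Fin n) : |x i| ≤ eNorm x := by
  rw [← Real.sqrt_sq_eq_abs]
  exact Real.sqrt_le_sqrt
    (Finset.single_le_sum (f := fun j => x j ^ 2) (fun j _ => sq_nonneg _) (Finset.mem_univ i))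

lemma continuous_eNorm {n : ℕ} : Continuous (eNorm (n := n)) :=
  Real.continuous_sqrt.comp (continuous_finset_sum _ fun i _ => (continuous_apply i).pow 2)

lemma eNorm_smul {n : ℕ} (c : ℝ) (x : Fin n → ℝ) : eNorm (c • x) = |c| * eNorm x := by
  unfold eNorm
  have h : ∑ i, (c • x) i ^ 2 = c ^ 2 * ∑ i, x i ^ 2 := by
    rw [Finset.mul_sum]
    exact Finset.sum_congr rfl fun i _ => by simp [mul_pow]
  rw [h, Real.sqrt_mul (sq_nonneg c), Real.sqrt_sq_eq_abs]

lemma norm_le_eNorm {n : ℕ} (x : Fin n → ℝ) : ‖x‖ ≤ eNorm x :=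
  (pi_norm_le_iff_of_nonneg (eNorm_nonneg x)).2 fun i => by
    rw [Real.norm_eq_abs]; exact abs_le_eNorm x i

lemma eNorm_eq_one_of_unit {n : ℕ} {x : Fin n → ℝ} (hx : eNorm x ≠ 0) :
    eNorm ((eNorm x)⁻¹ • x) = 1 := by
  rw [eNorm_smul, abs_inv, abs_of_nonneg (eNorm_nonneg x), inv_mul_cancel₀ hx]

lemma eNorm_zero {n : ℕ} : eNorm (0 : Fin n → ℝ) = 0 := by simp [eNorm]

lemma eNorm_normalized_le_one {n : ℕ} (x : Fin n → ℝ) : eNorm ((eNorm x)⁻¹ • x) ≤ 1 := by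
  by_cases hx : eNorm x = 0
  · rw [hx, inv_zero, zero_smul, eNorm_zero]; norm_num
  · rw [eNorm_eq_one_of_unit hx]

/-- The finite set of monomials of degree at most `N`. -/
def TT (n N : ℕ) : Finset (Fin n →₀ ℕ) :=
  (Finset.Iic (Finsupp.equivFunOnFinite.symm fun _ => N)).filter fun m => m.degree ≤ N

lemma mem_TT {n N : ℕ} {m : Fin n →₀ ℕ} (hm : m.degree ≤ N) : m ∈ TT n N := by
  refine Finset.mem_filter.mpr ⟨Finset.mem_Iic.mpr (Finsupp.le_def.mpr fun i => ?_), hm⟩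
  simpa using (Finsupp.le_degree i m).trans hm

lemma degree_le_of_mem_TT {n N : ℕ} {m : Fin n →₀ ℕ} (hm : m ∈ TT n N) : m.degree ≤ N :=
  (Finset.mem_filter.mp hm).2

lemma support_subset_TT {n N : ℕ} {p : MvPolynomial (Fin n) ℝ} (hp : p.totalDegree ≤ N) :
    p.support ⊆ TT n N := fun m hm =>
  mem_TT (le_trans (MvPolynomial.le_totalDegree hm) hp)

lemma eval_TT {n N : ℕ} {p : MvPolynomial (Fin n) ℝ} (hp : p.totalDegree ≤ N)
    (x : Fin n → ℝ) :
    eval x p = ∑ m ∈ TT n N, coeff m p * ∏ i, x i ^ m i := by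
  rw [eval_eq']
  exact Finset.sum_subset (support_subset_TT hp) fun m _ hm => by
    rw [MvPolynomial.notMem_support_iff.mp hm, zero_mul]

lemma evalHom_TT {n N : ℕ} {p : MvPolynomial (Fin n) ℝ} (hp : p.totalDegree ≤ N)
    (y : Fin n → ℝ) :
    eval y (homogeneousComponent N p)
      = ∑ m ∈ TT n N, (if m.degree = N then coeff m p else 0) * ∏ i, y i ^ m i := by
  have hsub : (homogeneousComponent N p).support ⊆ TT n N := by
    intro m hm
    apply support_subset_TT hp
    rw [MvPolynomial.mem_support_iff] at hm ⊢
    intro h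
    apply hm
    rw [coeff_homogeneousComponent]
    simp [h]
  rw [eval_eq', Finset.sum_subset hsub fun m _ hm => by
    rw [MvPolynomial.notMem_support_iff.mp hm, zero_mul]]
  exact Finset.sum_congr rfl fun m _ => by rw [coeff_homogeneousComponent]

lemma degree_eq_sum_univ {n : ℕ} (m : Fin n →₀ ℕ) : m.degree = ∑ i, m i :=
  (Finset.sum_subset (Finset.subset_univ _) fun i _ h => Finsupp.notMem_support_iff.mp h)

lemma pow_div_pow_eq {t : ℝ} (ht : t ≠ 0) {a b : ℕ} (h : a ≤ b) :
    t ^ a / t ^ b = (t⁻¹) ^ (b - a) := by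
  have hb : t ^ b = t ^ (b - a) * t ^ a := by rw [← pow_add]; congr 1; omega
  rw [hb, mul_comm, ← div_div, div_self (pow_ne_zero a ht), inv_pow, one_div]

lemma tendsto_eval_div {n d : ℕ} {f : MvPolynomial (Fin n) ℝ} (hf : f.totalDegree ≤ 2*d)
    {x : ℕ → (Fin n → ℝ)}
    (hx : Filter.Tendsto (fun k => eNorm (x k)) Filter.atTop Filter.atTop)
    {y : Fin n → ℝ}
    (hy : Filter.Tendsto (fun k => (eNorm (x k))⁻¹ • x k) Filter.atTop (nhds y)) :
    Filter.Tendsto (fun k => eval (x k) f / (eNorm (x k)) ^ (2*d)) Filter.atTop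
      (nhds (eval y (homogeneousComponent (2*d) f))) := by
  set u : ℕ → (Fin n → ℝ) := fun k => (eNorm (x k))⁻¹ • x k with hu
  have hsum : Filter.Tendsto (fun k => ∑ m ∈ TT n (2*d),
      coeff m f * (∏ i, u k i ^ m i) * ((eNorm (x k))⁻¹) ^ (2*d - m.degree)) Filter.atTop
      (nhds (∑ m ∈ TT n (2*d), coeff m f * (∏ i, y i ^ m i) * (0:ℝ) ^ (2*d - m.degree))) := by
    refine tendsto_finset_sum _ fun m hm => ?_
    have hprod : Filter.Tendsto (fun k => ∏ i, u k i ^ m i) Filter.atTop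
        (nhds (∏ i, y i ^ m i)) :=
      tendsto_finset_prod _ fun i _ => (((continuous_apply i).tendsto y).comp hy).pow _
    have hpow : Filter.Tendsto (fun k => ((eNorm (x k))⁻¹) ^ (2*d - m.degree)) Filter.atTop
        (nhds ((0:ℝ) ^ (2*d - m.degree))) :=
      (tendsto_inv_atTop_zero.comp hx).pow _
    exact (tendsto_const_nhds.mul hprod).mul hpow
  have hval : ∑ m ∈ TT n (2*d), coeff m f * (∏ i, y i ^ m i) * (0:ℝ) ^ (2*d - m.degree)
      = eval y (homogeneousComponent (2*d) f) := by
    rw [evalHom_TT hf]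
    refine Finset.sum_congr rfl fun m hm => ?_
    rw [zero_pow_eq]
    rcases eq_or_ne m.degree (2*d) with h | h
    · simp [h]
    · have h2 : 2*d - m.degree ≠ 0 := by
        have := degree_le_of_mem_TT hm
        omega
      simp [h, h2]
  have hev : ∀ᶠ k in Filter.atTop, eval (x k) f / (eNorm (x k)) ^ (2*d)
      = ∑ m ∈ TT n (2*d),
          coeff m f * (∏ i, u k i ^ m i) * ((eNorm (x k))⁻¹) ^ (2*d - m.degree) := by
    filter_upwards [hx.eventually_ge_atTop 1] with k hk
    have ht0 : eNorm (x k) ≠ 0 := ne_of_gt (lt_of_lt_of_le zero_lt_one hk)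
    have hxk : ∀ i, x k i = eNorm (x k) * u k i := by
      intro i
      simp only [hu, Pi.smul_apply, smul_eq_mul]
      field_simp
    rw [eval_TT hf, Finset.sum_div]
    refine Finset.sum_congr rfl fun m hm => ?_
    have hp : (∏ i, x k i ^ m i) = eNorm (x k) ^ m.degree * ∏ i, u k i ^ m i := by
      rw [degree_eq_sum_univ, ← Finset.prod_pow_eq_pow_sum, ← Finset.prod_mul_distrib]
      exact Finset.prod_congr rfl fun i _ => by rw [hxk i, mul_pow]
    rw [hp, mul_comm (eNorm (x k) ^ m.degree) _, ← mul_assoc, mul_div_assoc,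
        pow_div_pow_eq ht0 (degree_le_of_mem_TT hm)]
  rw [← hval]
  exact hsum.congr' (hev.mono fun k h => h.symm)

lemma lemmaA {n d : ℕ} {S : Set (Fin n → ℝ)} (hScl : IsClosed S)
    {f : MvPolynomial (Fin n) ℝ} (hf : f.totalDegree ≤ 2*d)
    (hpos : ∀ x ∈ S, 0 < eval x f)
    (hpos2 : ∀ y ∈ infReach S, 0 < eval y (homogeneousComponent (2*d) f)) :
    ∃ ε > 0, ∀ x ∈ S, ε * (1 + eNorm x ^ 2) ^ d ≤ eval x f := by
  by_contra hcon
  push_neg at hcon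
  choose x hxS hxlt using fun k : ℕ => hcon (1/(k+1 : ℝ)) (by positivity)
  by_cases hb : Filter.Tendsto (fun k => eNorm (x k)) Filter.atTop Filter.atTop
  · have hu_mem : ∀ k, (fun j => (eNorm (x j))⁻¹ • x j) k ∈ Metric.closedBall (0 : Fin n → ℝ) 1 := by
      intro k
      rw [Metric.mem_closedBall, dist_zero_right]
      exact (norm_le_eNorm _).trans (eNorm_normalized_le_one _)
    obtain ⟨y, -, φ, hφ, hyt⟩ := tendsto_subseq_of_bounded Metric.isBounded_closedBall hu_mem
    have hxφ : Filter.Tendsto (fun k => eNorm (x (φ k))) Filter.atTop Filter.atTop :=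
      hb.comp hφ.tendsto_atTop
    have hyt' : Filter.Tendsto (fun k => (eNorm (x (φ k)))⁻¹ • x (φ k)) Filter.atTop (nhds y) := hyt
    have hy1 : eNorm y = 1 := by
      have hc : Filter.Tendsto (fun k => eNorm ((eNorm (x (φ k)))⁻¹ • x (φ k)))
          Filter.atTop (nhds (eNorm y)) := (continuous_eNorm.tendsto y).comp hyt'
      have he : ∀ᶠ k in Filter.atTop, eNorm ((eNorm (x (φ k)))⁻¹ • x (φ k)) = 1 := by
        filter_upwards [hxφ.eventually_ge_atTop 1] with k hk
        exact eNorm_eq_one_of_unit (ne_of_gt (lt_of_lt_of_le zero_lt_one hk))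
      exact tendsto_nhds_unique ((tendsto_congr' he).mp hc) tendsto_const_nhds
    have hymem : y ∈ infReach S := ⟨hy1, fun k => x (φ k), fun k => hxS _, hxφ, hyt'⟩
    have hlim := tendsto_eval_div hf hxφ hyt'
    have hle : eval y (homogeneousComponent (2*d) f) ≤ 0 := by
      have hb0 : Filter.Tendsto (fun k : ℕ => 2^d * (1/((φ k)+1 : ℝ))) Filter.atTop (nhds 0) := by
        have h0 := (tendsto_one_div_add_atTop_nhds_zero_nat (𝕜 := ℝ)).comp hφ.tendsto_atTop
        simpa using (tendsto_const_nhds (x := (2:ℝ)^d)).mul h0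
      refine le_of_tendsto_of_tendsto hlim hb0 ?_
      filter_upwards [hxφ.eventually_ge_atTop 1] with k hk
      set t := eNorm (x (φ k)) with htdef
      have ht0 : (0:ℝ) < t := lt_of_lt_of_le zero_lt_one hk
      have h1t : (1 + t^2)^d ≤ 2^d * t^(2*d) := by
        calc (1+t^2)^d ≤ (2*t^2)^d := by
              apply pow_le_pow_left₀ (by positivity)
              nlinarith
          _ = 2^d * t^(2*d) := by rw [mul_pow, ← pow_mul]
      have hlt := hxlt (φ k)
      have htp : (0:ℝ) < t^(2*d) := by positivity
      rw [div_le_iff₀ htp]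
      calc eval (x (φ k)) f ≤ (1/((φ k)+1:ℝ)) * (1 + t^2)^d := le_of_lt hlt
        _ ≤ (1/((φ k)+1:ℝ)) * (2^d * t^(2*d)) := by
            apply mul_le_mul_of_nonneg_left h1t (by positivity)
        _ = 2^d * (1/((φ k)+1:ℝ)) * t^(2*d) := by ring
    exact absurd (hpos2 y hymem) (not_lt.mpr hle)
  · rw [Filter.tendsto_atTop] at hb
    push_neg at hb
    obtain ⟨M, hM⟩ := hb
    obtain ⟨φ, hφ, hφM⟩ := extraction_of_frequently_atTop hM
    have hmem : ∀ k, x (φ k) ∈ Metric.closedBall (0 : Fin n → ℝ) M := by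
      intro k
      rw [Metric.mem_closedBall, dist_zero_right]
      exact (norm_le_eNorm _).trans (le_of_lt (hφM k))
    obtain ⟨z, -, ψ, hψ, hxt⟩ := tendsto_subseq_of_bounded Metric.isBounded_closedBall hmem
    have hxt' : Filter.Tendsto (fun k => x (φ (ψ k))) Filter.atTop (nhds z) := hxt
    have hzS : z ∈ S := hScl.mem_of_tendsto hxt' (Filter.Eventually.of_forall fun k => hxS _)
    have hev : Filter.Tendsto (fun k => eval (x (φ (ψ k))) f) Filter.atTop (nhds (eval z f)) :=
      ((MvPolynomial.continuous_eval f).tendsto z).comp hxt'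
    have hle : eval z f ≤ 0 := by
      have hb0 : Filter.Tendsto (fun k : ℕ => (1/((φ (ψ k))+1 : ℝ)) * (1 + M^2)^d)
          Filter.atTop (nhds 0) := by
        have h0 := (tendsto_one_div_add_atTop_nhds_zero_nat (𝕜 := ℝ)).comp (hφ.comp hψ).tendsto_atTop
        simpa using h0.mul (tendsto_const_nhds (x := (1+M^2)^d))
      refine le_of_tendsto_of_tendsto hev hb0 ?_
      refine Filter.Eventually.of_forall fun k => ?_
      have hlt := hxlt (φ (ψ k))
      have hMle : eNorm (x (φ (ψ k))) ≤ M := le_of_lt (hφM (ψ k))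
      have h2' : (1 + eNorm (x (φ (ψ k)))^2)^d ≤ (1 + M^2)^d := by
        apply pow_le_pow_left₀ (by positivity)
        have hn := eNorm_nonneg (x (φ (ψ k)))
        nlinarith
      calc eval (x (φ (ψ k))) f
          ≤ (1/((φ (ψ k))+1:ℝ)) * (1+eNorm (x (φ (ψ k)))^2)^d := le_of_lt hlt
        _ ≤ (1/((φ (ψ k))+1:ℝ)) * (1+M^2)^d := by
            apply mul_le_mul_of_nonneg_left h2' (by positivity)
    exact absurd (hpos z hzS) (not_lt.mpr hle)


lemma mem_PolyLE {n N : ℕ} (f : PolyLE n N) :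
    (f : MvPolynomial (Fin n) ℝ).totalDegree ≤ N :=
  (MvPolynomial.mem_restrictTotalDegree _ _ _).mp f.2

lemma curve_cont {n N : ℕ} (f q : PolyLE n N) :
    Continuous (fun t : ℝ => f - t • q) := by
  apply continuous_induced_rng.mpr
  apply continuous_pi
  intro m
  have h : ∀ t : ℝ, coeff m (((f - t • q : PolyLE n N) : MvPolynomial (Fin n) ℝ))
      = coeff m (f : MvPolynomial (Fin n) ℝ) - t * coeff m (q : MvPolynomial (Fin n) ℝ) := by
    intro t
    rw [Submodule.coe_sub, Submodule.coe_smul, MvPolynomial.coeff_sub, MvPolynomial.coeff_smul,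
      smul_eq_mul]
  show Continuous fun t : ℝ => coeff m (((f - t • q : PolyLE n N) : MvPolynomial (Fin n) ℝ))
  simp only [h]
  exact continuous_const.sub (continuous_id.mul continuous_const)

lemma exists_scale {n N : ℕ} {P : Set (PolyLE n N)} {f : PolyLE n N}
    (hP : P ∈ nhds f) (q : PolyLE n N) : ∃ t : ℝ, 0 < t ∧ f - t • q ∈ P := by
  have hc : Filter.Tendsto (fun t : ℝ => f - t • q) (nhds 0) (nhds f) := by
    have h := (curve_cont f q).tendsto 0
    simp only [zero_smul, sub_zero] at h
    exact h
  have hev : {t : ℝ | f - t • q ∈ P} ∈ nhds (0:ℝ) := hc hP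
  have hev2 : ∀ᶠ t : ℝ in nhdsWithin 0 (Set.Ioi 0), f - t • q ∈ P ∧ t ∈ Set.Ioi 0 :=
    Filter.Eventually.and (nhdsWithin_le_nhds hev) self_mem_nhdsWithin
  obtain ⟨t, h1, h2⟩ := hev2.exists
  exact ⟨t, h2, h1⟩

lemma eval_sub_smul {n N : ℕ} (f q : PolyLE n N) (t : ℝ) (x : Fin n → ℝ) :
    eval x (((f - t • q : PolyLE n N)) : MvPolynomial (Fin n) ℝ)
      = eval x (f : MvPolynomial (Fin n) ℝ) - t * eval x (q : MvPolynomial (Fin n) ℝ) := by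
  rw [Submodule.coe_sub, Submodule.coe_smul, map_sub, smul_eq_C_mul, map_mul, eval_C]

def q1 (n N : ℕ) : PolyLE n N :=
  ⟨1, (MvPolynomial.mem_restrictTotalDegree _ _ _).mpr
    (by rw [MvPolynomial.totalDegree_one]; exact Nat.zero_le _)⟩

lemma eval_q1 {n N : ℕ} (x : Fin n → ℝ) :
    eval x ((q1 n N : PolyLE n N) : MvPolynomial (Fin n) ℝ) = 1 := by
  show eval x (1 : MvPolynomial (Fin n) ℝ) = 1
  simp

def q2 (n d : ℕ) : PolyLE n (2*d) :=
  ⟨(1 + ∑ i, (X i : MvPolynomial (Fin n) ℝ)^2)^d,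
    (MvPolynomial.mem_restrictTotalDegree _ _ _).mpr (by
      calc ((1 + ∑ i, (X i : MvPolynomial (Fin n) ℝ)^2)^d).totalDegree
          ≤ d * (1 + ∑ i, (X i : MvPolynomial (Fin n) ℝ)^2).totalDegree :=
            MvPolynomial.totalDegree_pow _ _
        _ ≤ d * 2 := by
            apply Nat.mul_le_mul_left
            refine le_trans (MvPolynomial.totalDegree_add _ _) (max_le ?_ ?_)
            · rw [MvPolynomial.totalDegree_one]; exact Nat.zero_le _
            · refine le_trans (MvPolynomial.totalDegree_finset_sum _ _)
                (Finset.sup_le fun i _ => ?_)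
              refine le_trans (MvPolynomial.totalDegree_pow _ _) ?_
              rw [MvPolynomial.totalDegree_X]
        _ = 2 * d := by ring)⟩

lemma eval_q2 {n d : ℕ} (x : Fin n → ℝ) :
    eval x ((q2 n d : PolyLE n (2*d)) : MvPolynomial (Fin n) ℝ) = (1 + eNorm x ^ 2)^d := by
  rw [sq_eNorm]
  show eval x ((1 + ∑ i, (X i : MvPolynomial (Fin n) ℝ)^2)^d) = _
  rw [map_pow, map_add, map_one, map_sum]
  congr 2
  exact Finset.sum_congr rfl fun i _ => by rw [map_pow, eval_X]

lemma isOpen_U {n N : ℕ} (f : PolyLE n N) (δ : ℝ) :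
    IsOpen {g : PolyLE n N | ∀ m ∈ TT n N,
      |coeff m (g : MvPolynomial (Fin n) ℝ) - coeff m (f : MvPolynomial (Fin n) ℝ)| < δ} := by
  have hcont : Continuous fun (p : PolyLE n N) (s : Fin n →₀ ℕ) =>
      coeff s (p : MvPolynomial (Fin n) ℝ) := continuous_induced_dom
  have hV : IsOpen {v : (Fin n →₀ ℕ) → ℝ | ∀ m ∈ TT n N,
      |v m - coeff m (f : MvPolynomial (Fin n) ℝ)| < δ} := by
    have heq : {v : (Fin n →₀ ℕ) → ℝ | ∀ m ∈ TT n N,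
        |v m - coeff m (f : MvPolynomial (Fin n) ℝ)| < δ}
        = ⋂ m ∈ TT n N, (fun v : (Fin n →₀ ℕ) → ℝ => v m) ⁻¹'
            (Metric.ball (coeff m (f : MvPolynomial (Fin n) ℝ)) δ) := by
      ext v
      simp [Metric.mem_ball, Real.dist_eq]
    rw [heq]
    exact isOpen_biInter_finset fun m _ =>
      Metric.isOpen_ball.preimage (continuous_apply m)
  exact hV.preimage hcont

lemma prod_pow_le {n d : ℕ} (x : Fin n → ℝ) {m : Fin n →₀ ℕ} (hm : m.degree ≤ 2*d) :
    |∏ i, x i ^ m i| ≤ (1 + eNorm x ^ 2)^d := by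
  set w : ℝ := 1 + eNorm x ^ 2 with hw
  have hw1 : (1:ℝ) ≤ w := by
    have := sq_nonneg (eNorm x)
    simp only [hw]
    nlinarith
  have hsq : Real.sqrt w ^ 2 = w := Real.sq_sqrt (by linarith)
  have hsw1 : (1:ℝ) ≤ Real.sqrt w := by
    rw [show (1:ℝ) = Real.sqrt 1 from Real.sqrt_one.symm]
    exact Real.sqrt_le_sqrt (by linarith)
  have hxle : ∀ i, |x i| ≤ Real.sqrt w := by
    intro i
    refine (abs_le_eNorm x i).trans ?_
    rw [show eNorm x = Real.sqrt (eNorm x ^ 2) from (Real.sqrt_sq (eNorm_nonneg x)).symm]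
    exact Real.sqrt_le_sqrt (by simp only [hw]; linarith)
  calc |∏ i, x i ^ m i| = ∏ i, |x i| ^ m i := by
        rw [Finset.abs_prod]
        exact Finset.prod_congr rfl fun i _ => abs_pow _ _
    _ ≤ ∏ i, (Real.sqrt w) ^ m i :=
        Finset.prod_le_prod (fun i _ => by positivity)
          (fun i _ => pow_le_pow_left₀ (abs_nonneg _) (hxle i) _)
    _ = (Real.sqrt w) ^ (∑ i, m i) := Finset.prod_pow_eq_pow_sum _ _ _
    _ ≤ (Real.sqrt w) ^ (2*d) :=
        pow_le_pow_right₀ hsw1 (by rw [← degree_eq_sum_univ]; exact hm)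
    _ = w ^ d := by rw [pow_mul, hsq]

end Stmt2Aux

open Stmt2Aux Filter in
/-- Proposition `innerer`: for closed `S ⊆ ℝⁿ`, a polynomial `f` of degree at most `2d`
lies in the interior of `P_{2d}(S)` iff `f > 0` on `S` and `f_{2d} > 0` on `S_∞`. -/
theorem stmt_2 (n d : ℕ) (hn : 0 < n) (hd : 0 < d) (S : Set (Fin n → ℝ))
    (hScl : IsClosed S) (f : PolyLE n (2 * d)) :
    f ∈ interior (Pcone n (2 * d) S) ↔
      (∀ x ∈ S, 0 < eval x (f : MvPolynomial (Fin n) ℝ)) ∧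
      (∀ y ∈ infReach S,
        0 < eval y (MvPolynomial.homogeneousComponent (2 * d) (f : MvPolynomial (Fin n) ℝ))) := by
  have hf : (f : MvPolynomial (Fin n) ℝ).totalDegree ≤ 2 * d := mem_PolyLE f
  constructor
  · intro hi
    have hP : Pcone n (2*d) S ∈ nhds f := mem_interior_iff_mem_nhds.mp hi
    constructor
    · obtain ⟨t, ht, htP⟩ := exists_scale hP (q1 n (2*d))
      intro x hx
      have h0 := htP x hx
      rw [eval_sub_smul, eval_q1, mul_one] at h0
      linarith
    · obtain ⟨t, ht, htP⟩ := exists_scale hP (q2 n d)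
      intro y hy
      obtain ⟨hy1, x, hxS, hxn, hxd⟩ := hy
      have hlim := tendsto_eval_div hf hxn hxd
      have hbound : ∀ᶠ k in atTop,
          t ≤ eval (x k) (f : MvPolynomial (Fin n) ℝ) / (eNorm (x k)) ^ (2*d) := by
        filter_upwards [hxn.eventually_ge_atTop 1] with k hk
        have htp : (0:ℝ) < eNorm (x k) ^ (2*d) := by positivity
        rw [le_div_iff₀ htp]
        have h0 := htP (x k) (hxS k)
        rw [eval_sub_smul, eval_q2] at h0
        have h1 : eNorm (x k) ^ (2*d) ≤ (1 + eNorm (x k) ^ 2)^d := by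
          rw [pow_mul]
          exact pow_le_pow_left₀ (by positivity) (by nlinarith) d
        nlinarith
      have := ge_of_tendsto hlim hbound
      linarith
  · rintro ⟨h1, h2⟩
    obtain ⟨ε, hε, hA⟩ := lemmaA hScl hf h1 h2
    set c : ℝ := ((TT n (2*d)).card : ℝ) with hc
    have hc0 : 0 ≤ c := by positivity
    set δ : ℝ := ε / (c + 1) with hδ
    have hδ0 : 0 < δ := by positivity
    refine mem_interior.mpr ⟨{g : PolyLE n (2*d) | ∀ m ∈ TT n (2*d),
      |coeff m (g : MvPolynomial (Fin n) ℝ) - coeff m (f : MvPolynomial (Fin n) ℝ)| < δ},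
      ?_, isOpen_U f δ, by intro m _; simpa using hδ0⟩
    intro g hg
    intro x hx
    have hgdeg : (g : MvPolynomial (Fin n) ℝ).totalDegree ≤ 2*d := mem_PolyLE g
    set w : ℝ := 1 + eNorm x ^ 2 with hw
    have hw0 : (0:ℝ) < w := by positivity
    have hdiff : eval x (g : MvPolynomial (Fin n) ℝ) - eval x (f : MvPolynomial (Fin n) ℝ)
        = ∑ m ∈ TT n (2*d),
            (coeff m (g : MvPolynomial (Fin n) ℝ) - coeff m (f : MvPolynomial (Fin n) ℝ))
              * ∏ i, x i ^ m i := by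
      rw [eval_TT hgdeg x, eval_TT hf x, ← Finset.sum_sub_distrib]
      exact Finset.sum_congr rfl fun m _ => (sub_mul _ _ _).symm
    have habs : |eval x (g : MvPolynomial (Fin n) ℝ) - eval x (f : MvPolynomial (Fin n) ℝ)|
        ≤ c * (δ * w ^ d) := by
      rw [hdiff]
      refine le_trans (Finset.abs_sum_le_sum_abs _ _) ?_
      have hterm : ∀ m ∈ TT n (2*d),
          |(coeff m (g : MvPolynomial (Fin n) ℝ) - coeff m (f : MvPolynomial (Fin n) ℝ))
            * ∏ i, x i ^ m i| ≤ δ * w ^ d := by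
        intro m hm
        rw [abs_mul]
        have h1' := le_of_lt (hg m hm)
        have h2' := prod_pow_le x (degree_le_of_mem_TT hm)
        have := abs_nonneg ((coeff m (g : MvPolynomial (Fin n) ℝ)
          - coeff m (f : MvPolynomial (Fin n) ℝ)))
        have := abs_nonneg (∏ i, x i ^ m i)
        exact mul_le_mul h1' h2' (abs_nonneg _) (le_of_lt hδ0)
      refine le_trans (Finset.sum_le_sum hterm) ?_
      rw [Finset.sum_const, nsmul_eq_mul]
    have hfx := hA x hx
    have hwd : (0:ℝ) < w ^ d := by positivity
    have hcd : c * δ ≤ ε := by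
      rw [hδ]
      rw [div_eq_mul_inv]
      have : c * (ε * (c+1)⁻¹) = ε * (c * (c+1)⁻¹) := by ring
      rw [this]
      have hle1 : c * (c+1)⁻¹ ≤ 1 := by
        rw [mul_inv_le_iff₀ (by linarith)]
        linarith
      nlinarith
    have := abs_le.mp habs
    nlinarith [this.1, this.2]

end
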